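/- Let A be a bounded operator on ℓ² such that the commutator [N,A] is also bounded, where N = diag(1,2,3,...). Then for every s ∈ [-2,2], A extends to a bounded operator on the weighted space ℓ²_s, and there exists a constant C (independent of A and s) such that ‖A‖_{B(ℓ²_s)} ≤ C·max{‖A‖, ‖[N,A]‖}. -/

import Mathlib

open scoped ENNReal NNReal
open Complex

/-- The Hilbert space `ℓ²` of square-summable complex sequences indexed by `ℕ⁺`. -/
noncomputable abbrev ell2 : Type := lp (fun _ : ℕ+ => ℂ) 2

/-- The matrix entry `A_i^j` of a bounded operator `A` on `ℓ²`. -/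
noncomputable def entry (A : ell2 →L[ℂ] ell2) (i j : ℕ+) : ℂ :=
  (A (lp.single 2 j 1) : ∀ _ : ℕ+, ℂ) i

namespace Stmt4Aux

/-- Finite linear combination of basis vectors. -/
noncomputable def vec (G : Finset ℕ+) (c : ℕ+ → ℂ) : ell2 :=
  ∑ j ∈ G, lp.single 2 j (c j)

lemma norm_sq_vec (G : Finset ℕ+) (c : ℕ+ → ℂ) :
    ‖vec G c‖ ^ 2 = ∑ j ∈ G, ‖c j‖ ^ 2 := by
  have h2 : (0:ℝ) < (2 : ℝ≥0∞).toReal := by norm_num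
  have key := lp.norm_sum_single (E := fun _ : ℕ+ => ℂ) h2 c G
  simpa only [vec, show (2:ℝ≥0∞).toReal = ((2:ℕ):ℝ) by norm_num, Real.rpow_natCast] using key

lemma norm_vec_le (G : Finset ℕ+) (c : ℕ+ → ℂ) :
    ‖vec G c‖ ≤ Real.sqrt (∑ j ∈ G, ‖c j‖ ^ 2) := by
  rw [show (∑ j ∈ G, ‖c j‖ ^ 2) = ‖vec G c‖ ^ 2 from (norm_sq_vec G c).symm,
    Real.sqrt_sq (norm_nonneg _)]

lemma apply_vec_coord (A : ell2 →L[ℂ] ell2) (G : Finset ℕ+) (c : ℕ+ → ℂ) (i : ℕ+) :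
    (A (vec G c) : ∀ _ : ℕ+, ℂ) i = ∑ j ∈ G, c j * entry A i j := by
  have h1 : vec G c = ∑ j ∈ G, c j • lp.single 2 j (1:ℂ) := by
    refine Finset.sum_congr rfl fun j _ => ?_
    rw [← lp.single_smul]; simp
  rw [h1, map_sum]
  rw [lp.coeFn_sum]
  simp only [Finset.sum_apply]
  refine Finset.sum_congr rfl fun j _ => ?_
  rw [map_smul, lp.coeFn_smul]
  simp [entry, smul_eq_mul]

lemma sum_sq_coord_le (F : Finset ℕ+) (w : ell2) :
    ∑ i ∈ F, ‖(w : ∀ _ : ℕ+, ℂ) i‖ ^ 2 ≤ ‖w‖ ^ 2 := by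
  have h2 : (0:ℝ) < (2 : ℝ≥0∞).toReal := by norm_num
  have key := lp.hasSum_norm h2 w
  simp only [show (2:ℝ≥0∞).toReal = ((2:ℕ):ℝ) by norm_num, Real.rpow_natCast] at key
  exact sum_le_hasSum F (fun i _ => by positivity) key

/-- Main coordinate-sum bound via Cauchy–Schwarz. -/
lemma sum_coord_bound (T : ell2 →L[ℂ] ell2) (w : ell2) (F : Finset ℕ+) (y α : ℕ+ → ℂ)
    (hα : ∀ i, ‖α i‖ ≤ 1) :
    ‖∑ i ∈ F, α i * (starRingEnd ℂ) (y i) * (T w : ∀ _ : ℕ+, ℂ) i‖ ≤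
      ‖T‖ * ‖w‖ * Real.sqrt (∑ i ∈ F, ‖y i‖ ^ 2) := by
  have step1 : ‖∑ i ∈ F, α i * (starRingEnd ℂ) (y i) * (T w : ∀ _ : ℕ+, ℂ) i‖ ≤
      ∑ i ∈ F, ‖y i‖ * ‖(T w : ∀ _ : ℕ+, ℂ) i‖ := by
    refine (norm_sum_le _ _).trans (Finset.sum_le_sum fun i _ => ?_)
    rw [norm_mul, norm_mul, Complex.norm_conj]
    calc ‖α i‖ * ‖y i‖ * ‖(T w : ∀ _ : ℕ+, ℂ) i‖ ≤ 1 * ‖y i‖ * ‖(T w : ∀ _ : ℕ+, ℂ) i‖ := by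
          gcongr; exact hα i
      _ = ‖y i‖ * ‖(T w : ∀ _ : ℕ+, ℂ) i‖ := by ring
  have step2 : ∑ i ∈ F, ‖y i‖ * ‖(T w : ∀ _ : ℕ+, ℂ) i‖ ≤
      Real.sqrt (∑ i ∈ F, ‖y i‖ ^ 2) * Real.sqrt (∑ i ∈ F, ‖(T w : ∀ _ : ℕ+, ℂ) i‖ ^ 2) :=
    Real.sum_mul_le_sqrt_mul_sqrt F _ _
  have step3 : Real.sqrt (∑ i ∈ F, ‖(T w : ∀ _ : ℕ+, ℂ) i‖ ^ 2) ≤ ‖T‖ * ‖w‖ := by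
    refine (Real.sqrt_le_sqrt (sum_sq_coord_le F (T w))).trans ?_
    rw [Real.sqrt_sq (norm_nonneg _)]
    exact T.le_opNorm w
  calc _ ≤ ∑ i ∈ F, ‖y i‖ * ‖(T w : ∀ _ : ℕ+, ℂ) i‖ := step1
    _ ≤ _ := step2
    _ ≤ Real.sqrt (∑ i ∈ F, ‖y i‖ ^ 2) * (‖T‖ * ‖w‖) := by
        exact mul_le_mul_of_nonneg_left step3 (Real.sqrt_nonneg _)
    _ = ‖T‖ * ‖w‖ * Real.sqrt (∑ i ∈ F, ‖y i‖ ^ 2) := by ring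

lemma pnz (i : ℕ+) : (i:ℂ) ≠ 0 := by
  exact_mod_cast Nat.cast_ne_zero.mpr i.ne_zero

lemma norm_cpow_pnat (i : ℕ+) (c : ℂ) : ‖(i:ℂ) ^ c‖ = ((i:ℕ):ℝ) ^ c.re := by
  have h : (0:ℝ) < ((i:ℕ):ℝ) := by exact_mod_cast i.pos
  rw [show ((i:ℕ+):ℂ) = ((((i:ℕ):ℝ)):ℂ) by push_cast; rfl]
  rw [Complex.norm_cpow_eq_rpow_re_of_pos h]

/-- Combined bound given a two-term decomposition. -/
lemma decomp_bound (A B : ell2 →L[ℂ] ell2) (M : ℝ) (hA : ‖A‖ ≤ M) (hB : ‖B‖ ≤ M)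
    (F G : Finset ℕ+) (x y : ℕ+ → ℂ) (α β x' x'' : ℕ+ → ℂ)
    (hα : ∀ i, ‖α i‖ ≤ 1) (hβ : ∀ i, ‖β i‖ ≤ 1)
    (hx' : ∀ j, ‖x' j‖ ≤ ‖x j‖) (hx'' : ∀ j, ‖x'' j‖ ≤ ‖x j‖) (S : ℂ)
    (hS : S = (∑ i ∈ F, α i * (starRingEnd ℂ) (y i) * (A (vec G x') : ∀ _ : ℕ+, ℂ) i)
          + ∑ i ∈ F, β i * (starRingEnd ℂ) (y i) * (B (vec G x'') : ∀ _ : ℕ+, ℂ) i) :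
    ‖S‖ ≤ 2 * M * (Real.sqrt (∑ j ∈ G, ‖x j‖ ^ 2) * Real.sqrt (∑ i ∈ F, ‖y i‖ ^ 2)) := by
  have hM : 0 ≤ M := le_trans (norm_nonneg A) hA
  have hXnn : (0:ℝ) ≤ ∑ j ∈ G, ‖x j‖ ^ 2 := by positivity
  have hsq : ∀ z : ℕ+ → ℂ, (∀ j, ‖z j‖ ≤ ‖x j‖) →
      Real.sqrt (∑ j ∈ G, ‖z j‖ ^ 2) ≤ Real.sqrt (∑ j ∈ G, ‖x j‖ ^ 2) := by
    intro z hz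
    apply Real.sqrt_le_sqrt
    refine Finset.sum_le_sum fun j _ => ?_
    have := hz j
    nlinarith [norm_nonneg (z j), norm_nonneg (x j)]
  have key : ∀ (T : ell2 →L[ℂ] ell2) (z γ : ℕ+ → ℂ), ‖T‖ ≤ M → (∀ i, ‖γ i‖ ≤ 1) →
      (∀ j, ‖z j‖ ≤ ‖x j‖) →
      ‖∑ i ∈ F, γ i * (starRingEnd ℂ) (y i) * (T (vec G z) : ∀ _ : ℕ+, ℂ) i‖ ≤
        M * (Real.sqrt (∑ j ∈ G, ‖x j‖ ^ 2) * Real.sqrt (∑ i ∈ F, ‖y i‖ ^ 2)) := by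
    intro T z γ hT hγ hz
    refine (sum_coord_bound T (vec G z) F y γ hγ).trans ?_
    have h1 : ‖vec G z‖ ≤ Real.sqrt (∑ j ∈ G, ‖x j‖ ^ 2) :=
      (norm_vec_le G z).trans (hsq z hz)
    calc ‖T‖ * ‖vec G z‖ * Real.sqrt (∑ i ∈ F, ‖y i‖ ^ 2)
        ≤ M * Real.sqrt (∑ j ∈ G, ‖x j‖ ^ 2) * Real.sqrt (∑ i ∈ F, ‖y i‖ ^ 2) := by
          have := mul_le_mul hT h1 (norm_nonneg _) hM
          exact mul_le_mul_of_nonneg_right this (Real.sqrt_nonneg _)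
      _ = M * (Real.sqrt (∑ j ∈ G, ‖x j‖ ^ 2) * Real.sqrt (∑ i ∈ F, ‖y i‖ ^ 2)) := by ring
  rw [hS]
  calc ‖_ + _‖ ≤ _ + _ := norm_add_le _ _
    _ ≤ M * (Real.sqrt (∑ j ∈ G, ‖x j‖ ^ 2) * Real.sqrt (∑ i ∈ F, ‖y i‖ ^ 2))
        + M * (Real.sqrt (∑ j ∈ G, ‖x j‖ ^ 2) * Real.sqrt (∑ i ∈ F, ‖y i‖ ^ 2)) :=
      add_le_add (key A x' α hA hα hx') (key B x'' β hB hβ hx'')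
    _ = 2 * M * (Real.sqrt (∑ j ∈ G, ‖x j‖ ^ 2) * Real.sqrt (∑ i ∈ F, ‖y i‖ ^ 2)) := by ring


lemma cpow_shift_up (i : ℕ+) (c : ℂ) : (i:ℂ) ^ c = (i:ℂ) ^ (c - 1) * (i:ℂ) := by
  conv_lhs => rw [show c = (c-1)+1 by ring]
  rw [Complex.cpow_add _ _ (pnz i), Complex.cpow_one]

lemma cpow_shift_neg (j : ℕ+) (c : ℂ) : (j:ℂ) ^ (1 - c) = (j:ℂ) * (j:ℂ) ^ (-c) := by
  conv_lhs => rw [show (1:ℂ) - c = 1 + -c by ring]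
  rw [Complex.cpow_add _ _ (pnz j), Complex.cpow_one]

lemma boundary_bound (A B : ell2 →L[ℂ] ell2)
    (hAB : ∀ i j : ℕ+, entry B i j = ((i:ℂ) - (j:ℂ)) * entry A i j)
    (M : ℝ) (hA : ‖A‖ ≤ M) (hB : ‖B‖ ≤ M)
    (F G : Finset ℕ+) (x y : ℕ+ → ℂ) (c : ℂ) (hc : c.re = 1 ∨ c.re = -1) :
    ‖∑ i ∈ F, ∑ j ∈ G, (i:ℂ) ^ c * (j:ℂ) ^ (-c) * entry A i j * x j * (starRingEnd ℂ) (y i)‖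
      ≤ 2 * M * (Real.sqrt (∑ j ∈ G, ‖x j‖ ^ 2) * Real.sqrt (∑ i ∈ F, ‖y i‖ ^ 2)) := by
  have hinv : ∀ j : ℕ+, ‖((j:ℂ))⁻¹‖ ≤ 1 := by
    intro j
    rw [norm_inv]
    have h1 : (1:ℝ) ≤ ‖(j:ℂ)‖ := by
      rw [show ((j:ℕ+):ℂ) = (((j:ℕ)):ℂ) by push_cast; rfl, Complex.norm_natCast]
      exact_mod_cast j.one_le
    rw [inv_le_one_iff₀]
    right; exact h1
  rcases hc with hc | hc
  · -- c.re = 1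
    set α : ℕ+ → ℂ := fun i => (i:ℂ) ^ (c - 1) with hαdef
    set x' : ℕ+ → ℂ := fun j => (j:ℂ) ^ (1 - c) * x j with hx'def
    set x'' : ℕ+ → ℂ := fun j => ((j:ℂ))⁻¹ * ((j:ℂ) ^ (1 - c) * x j) with hx''def
    have hα : ∀ i, ‖α i‖ = 1 := by
      intro i
      rw [hαdef]
      simp only
      rw [norm_cpow_pnat]
      simp [Complex.sub_re, hc]
    have hx' : ∀ j, ‖x' j‖ = ‖x j‖ := by
      intro j
      rw [hx'def]
      simp only
      rw [norm_mul, norm_cpow_pnat]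
      simp [Complex.sub_re, hc]
    have hx'' : ∀ j, ‖x'' j‖ ≤ ‖x j‖ := by
      intro j
      rw [hx''def]
      simp only
      rw [norm_mul]
      calc ‖((j:ℂ))⁻¹‖ * ‖(j:ℂ) ^ (1-c) * x j‖ ≤ 1 * ‖x j‖ := by
            rw [show ‖(j:ℂ) ^ (1-c) * x j‖ = ‖x' j‖ from rfl, hx' j]
            exact mul_le_mul_of_nonneg_right (hinv j) (norm_nonneg _)
        _ = ‖x j‖ := one_mul _
    refine decomp_bound A B M hA hB F G x y α α x' x'' (fun i => le_of_eq (hα i))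
      (fun i => le_of_eq (hα i)) (fun j => le_of_eq (hx' j)) hx'' _ ?_
    rw [← Finset.sum_add_distrib]
    refine Finset.sum_congr rfl fun i _ => ?_
    rw [apply_vec_coord, apply_vec_coord, Finset.mul_sum, Finset.mul_sum,
      ← Finset.sum_add_distrib]
    refine Finset.sum_congr rfl fun j _ => ?_
    rw [hAB i j]
    simp only [hαdef, hx'def, hx''def]
    rw [cpow_shift_up i c, cpow_shift_neg j c]
    have hj := pnz j
    field_simp
    ring
  · -- c.re = -1
    set α : ℕ+ → ℂ := fun i => (i:ℂ) ^ (c + 1) with hαdef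
    set β : ℕ+ → ℂ := fun i => -((i:ℂ) ^ (c + 1) * ((i:ℂ))⁻¹) with hβdef
    set x' : ℕ+ → ℂ := fun j => (j:ℂ) ^ (-c - 1) * x j with hx'def
    have hα : ∀ i, ‖α i‖ = 1 := by
      intro i
      rw [hαdef]
      simp only
      rw [norm_cpow_pnat]
      simp [Complex.add_re, hc]
    have hβ : ∀ i, ‖β i‖ ≤ 1 := by
      intro i
      rw [hβdef]
      simp only [norm_neg, norm_mul]
      calc ‖(i:ℂ) ^ (c+1)‖ * ‖((i:ℂ))⁻¹‖ ≤ 1 * 1 := by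
            refine mul_le_mul ?_ (hinv i) (norm_nonneg _) zero_le_one
            rw [norm_cpow_pnat]; simp [Complex.add_re, hc]
        _ = 1 := one_mul 1
    have hx' : ∀ j, ‖x' j‖ = ‖x j‖ := by
      intro j
      rw [hx'def]
      simp only
      rw [norm_mul, norm_cpow_pnat]
      simp [Complex.sub_re, Complex.neg_re, hc]
    refine decomp_bound A B M hA hB F G x y α β x' x' (fun i => le_of_eq (hα i))
      hβ (fun j => le_of_eq (hx' j)) (fun j => le_of_eq (hx' j)) _ ?_
    rw [← Finset.sum_add_distrib]
    refine Finset.sum_congr rfl fun i _ => ?_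
    rw [apply_vec_coord, apply_vec_coord, Finset.mul_sum, Finset.mul_sum,
      ← Finset.sum_add_distrib]
    refine Finset.sum_congr rfl fun j _ => ?_
    rw [hAB i j]
    simp only [hαdef, hβdef, hx'def]
    have e1 : (i:ℂ) ^ c = (i:ℂ) ^ (c + 1) * ((i:ℂ))⁻¹ := by
      rw [cpow_shift_up i (c+1), add_sub_cancel_right]
      field_simp [pnz i]
    have e2 : (j:ℂ) ^ (-c) = (j:ℂ) ^ (-c - 1) * (j:ℂ) := cpow_shift_up j (-c)
    rw [e1, e2]
    have hi := pnz i
    field_simp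
    ring


lemma rpow_interp_le {a : ℝ} (ha : 0 ≤ a) (r : ℝ) : a ^ (1 - r) * a ^ r ≤ a := by
  rcases eq_or_lt_of_le ha with h | h
  · rcases eq_or_ne r 0 with rfl | hr
    · simp [← h]
    · rw [← h, Real.zero_rpow hr, mul_zero]
  · rw [← Real.rpow_add h, sub_add_cancel, Real.rpow_one]

lemma interior_bound (A B : ell2 →L[ℂ] ell2)
    (hAB : ∀ i j : ℕ+, entry B i j = ((i:ℂ) - (j:ℂ)) * entry A i j)
    (M : ℝ) (hA : ‖A‖ ≤ M) (hB : ‖B‖ ≤ M)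
    (F G : Finset ℕ+) (x y : ℕ+ → ℂ) (t : ℝ) (ht : t ∈ Set.Icc (-1:ℝ) 1) :
    ‖∑ i ∈ F, ∑ j ∈ G,
        (i:ℂ) ^ (t:ℂ) * (j:ℂ) ^ (-(t:ℂ)) * entry A i j * x j * (starRingEnd ℂ) (y i)‖
      ≤ 2 * M * (Real.sqrt (∑ j ∈ G, ‖x j‖ ^ 2) * Real.sqrt (∑ i ∈ F, ‖y i‖ ^ 2)) := by
  have hM : 0 ≤ M := le_trans (norm_nonneg A) hA
  set a : ℝ := 2 * M * (Real.sqrt (∑ j ∈ G, ‖x j‖ ^ 2) * Real.sqrt (∑ i ∈ F, ‖y i‖ ^ 2))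
    with hadef
  have ha : 0 ≤ a := by positivity
  set f : ℂ → ℂ := fun z => ∑ i ∈ F, ∑ j ∈ G,
      (i:ℂ) ^ (2*z-1) * (j:ℂ) ^ (-(2*z-1)) * entry A i j * x j * (starRingEnd ℂ) (y i)
    with hfdef
  have hdiff : Differentiable ℂ f := by
    refine Differentiable.fun_sum fun i _ => Differentiable.fun_sum fun j _ => ?_
    have h1 : Differentiable ℂ fun z : ℂ => (i:ℂ) ^ (2*z-1) :=
      Differentiable.const_cpow (by fun_prop) (Or.inl (pnz i))
    have h2 : Differentiable ℂ fun z : ℂ => (j:ℂ) ^ (-(2*z-1)) :=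
      Differentiable.const_cpow (by fun_prop) (Or.inl (pnz j))
    exact ((h1.mul h2).mul_const _).mul_const _ |>.mul_const _
  have hnorm_le : ∀ z : ℂ, z.re ∈ Set.Icc (0:ℝ) 1 → ‖f z‖ ≤
      ∑ i ∈ F, ∑ j ∈ G, ((i:ℕ):ℝ) * ((j:ℕ):ℝ) * (‖entry A i j‖ * ‖x j‖ * ‖y i‖) := by
    intro z hz
    refine (norm_sum_le _ _).trans (Finset.sum_le_sum fun i _ => ?_)
    refine (norm_sum_le _ _).trans (Finset.sum_le_sum fun j _ => ?_)
    have hi1 : (1:ℝ) ≤ ((i:ℕ):ℝ) := by exact_mod_cast i.one_le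
    have hj1 : (1:ℝ) ≤ ((j:ℕ):ℝ) := by exact_mod_cast j.one_le
    have hre : (2*z-1).re = 2 * z.re - 1 := by simp
    have h1 : ‖(i:ℂ) ^ (2*z-1)‖ ≤ ((i:ℕ):ℝ) := by
      rw [norm_cpow_pnat, hre]
      calc ((i:ℕ):ℝ) ^ (2*z.re-1) ≤ ((i:ℕ):ℝ) ^ (1:ℝ) :=
            Real.rpow_le_rpow_of_exponent_le hi1 (by cases hz; linarith)
        _ = ((i:ℕ):ℝ) := Real.rpow_one _
    have h2 : ‖(j:ℂ) ^ (-(2*z-1))‖ ≤ ((j:ℕ):ℝ) := by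
      rw [norm_cpow_pnat]
      have : (-(2*z-1)).re = -(2*z.re-1) := by simp
      rw [this]
      calc ((j:ℕ):ℝ) ^ (-(2*z.re-1)) ≤ ((j:ℕ):ℝ) ^ (1:ℝ) :=
            Real.rpow_le_rpow_of_exponent_le hj1 (by cases hz; linarith)
        _ = ((j:ℕ):ℝ) := Real.rpow_one _
    calc ‖(i:ℂ) ^ (2*z-1) * (j:ℂ) ^ (-(2*z-1)) * entry A i j * x j * (starRingEnd ℂ) (y i)‖
        = ‖(i:ℂ) ^ (2*z-1)‖ * ‖(j:ℂ) ^ (-(2*z-1))‖ * (‖entry A i j‖ * ‖x j‖ * ‖y i‖) := by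
          simp only [norm_mul, Complex.norm_conj]; ring
      _ ≤ ((i:ℕ):ℝ) * ((j:ℕ):ℝ) * (‖entry A i j‖ * ‖x j‖ * ‖y i‖) := by
          have hn : (0:ℝ) ≤ ‖entry A i j‖ * ‖x j‖ * ‖y i‖ := by positivity
          have := mul_le_mul h1 h2 (norm_nonneg _) (le_trans zero_le_one hi1)
          exact mul_le_mul_of_nonneg_right this hn
  have hbdd : BddAbove ((norm ∘ f) ''
      (Complex.HadamardThreeLines.verticalClosedStrip 0 1)) := by
    refine ⟨∑ i ∈ F, ∑ j ∈ G, ((i:ℕ):ℝ) * ((j:ℕ):ℝ) * (‖entry A i j‖ * ‖x j‖ * ‖y i‖), ?_⟩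
    rintro r ⟨z, hz, rfl⟩
    exact hnorm_le z hz
  have hedge0 : ∀ z ∈ Complex.re ⁻¹' {(0:ℝ)}, ‖f z‖ ≤ a := by
    intro z hz
    have hre : (2*z-1).re = -1 := by
      simp only [Set.mem_preimage, Set.mem_singleton_iff] at hz
      simp [hz]
    exact boundary_bound A B hAB M hA hB F G x y (2*z-1) (Or.inr hre)
  have hedge1 : ∀ z ∈ Complex.re ⁻¹' {(1:ℝ)}, ‖f z‖ ≤ a := by
    intro z hz
    have hre : (2*z-1).re = 1 := by
      simp only [Set.mem_preimage, Set.mem_singleton_iff] at hz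
      simp [hz]
      norm_num
    exact boundary_bound A B hAB M hA hB F G x y (2*z-1) (Or.inl hre)
  set z₀ : ℂ := (((t+1)/2 : ℝ) : ℂ) with hz₀def
  have hz₀ : z₀ ∈ Complex.HadamardThreeLines.verticalClosedStrip 0 1 := by
    simp only [Complex.HadamardThreeLines.verticalClosedStrip, Set.mem_preimage, hz₀def,
      Complex.ofReal_re, Set.mem_Icc]
    cases ht; constructor <;> linarith
  have key := Complex.HadamardThreeLines.norm_le_interp_of_mem_verticalClosedStrip' (f := f)
    zero_lt_one hz₀ hdiff.diffContOnCl hbdd hedge0 hedge1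
  simp only [sub_zero, div_one] at key
  have hfz₀ : f z₀ = ∑ i ∈ F, ∑ j ∈ G,
      (i:ℂ) ^ (t:ℂ) * (j:ℂ) ^ (-(t:ℂ)) * entry A i j * x j * (starRingEnd ℂ) (y i) := by
    rw [hfdef]
    have : 2*z₀-1 = (t:ℂ) := by rw [hz₀def]; push_cast; ring
    simp only [this]
  rw [hfz₀] at key
  refine key.trans ?_
  have := rpow_interp_le ha z₀.re
  calc a ^ (1 - z₀.re) * a ^ z₀.re ≤ a := this
    _ = _ := rfl


lemma coord_continuous (i : ℕ+) : Continuous fun w : ell2 => (w : ∀ _ : ℕ+, ℂ) i := by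
  refine (LipschitzWith.of_dist_le_mul (K := 1) fun w w' => ?_).continuous
  rw [dist_eq_norm, dist_eq_norm, NNReal.coe_one, one_mul]
  have : (w : ∀ _ : ℕ+, ℂ) i - (w' : ∀ _ : ℕ+, ℂ) i = ((w - w' : ell2) : ∀ _ : ℕ+, ℂ) i := by
    rw [lp.coeFn_sub]; rfl
  rw [this]
  exact lp.norm_apply_le_norm (by norm_num) _ _

lemma cpow_real_eq (i : ℕ+) (t : ℝ) :
    (i:ℂ) ^ ((t:ℝ):ℂ) = ((((i:ℕ):ℝ) ^ t : ℝ) : ℂ) := by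
  have h : (0:ℝ) ≤ ((i:ℕ):ℝ) := by positivity
  rw [show ((i:ℕ+):ℂ) = ((((i:ℕ):ℝ)):ℂ) from by push_cast; rfl,
    ← Complex.ofReal_cpow h]

lemma cpow_real_neg_eq (i : ℕ+) (t : ℝ) :
    (i:ℂ) ^ (-(t:ℂ)) = ((((i:ℕ):ℝ) ^ (-t) : ℝ) : ℂ) := by
  rw [show -(t:ℂ) = (((-t:ℝ)):ℂ) from by push_cast; ring]
  exact cpow_real_eq i (-t)

lemma partial_bound (A B : ell2 →L[ℂ] ell2)
    (hAB : ∀ i j : ℕ+, entry B i j = ((i:ℂ) - (j:ℂ)) * entry A i j)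
    (M : ℝ) (hA : ‖A‖ ≤ M) (hB : ‖B‖ ≤ M)
    (t : ℝ) (ht : t ∈ Set.Icc (-1:ℝ) 1) (u : ell2) (W' : ℝ)
    (hW' : ∀ G : Finset ℕ+, ∑ j ∈ G, (((j:ℕ):ℝ) ^ t) ^ 2 * ‖(u : ∀ _ : ℕ+, ℂ) j‖ ^ 2 ≤ W')
    (F : Finset ℕ+) (y : ℕ+ → ℂ) :
    ‖∑ i ∈ F, ((((i:ℕ):ℝ) ^ t : ℝ) : ℂ) * (A u : ∀ _ : ℕ+, ℂ) i * (starRingEnd ℂ) (y i)‖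
      ≤ 2 * M * (Real.sqrt W' * Real.sqrt (∑ i ∈ F, ‖y i‖ ^ 2)) := by
  have hM : 0 ≤ M := le_trans (norm_nonneg A) hA
  have hW'0 : 0 ≤ W' := le_trans (by simp) (hW' ∅)
  set Φ : ell2 → ℂ := fun w =>
    ∑ i ∈ F, ((((i:ℕ):ℝ) ^ t : ℝ) : ℂ) * (A w : ∀ _ : ℕ+, ℂ) i * (starRingEnd ℂ) (y i)
    with hΦdef
  have hcont : Continuous Φ := by
    refine continuous_finset_sum _ fun i _ => ?_
    exact (continuous_const.mul ((coord_continuous i).comp A.continuous)).mul continuous_const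
  set c : ℕ+ → ℂ := fun j => (u : ∀ _ : ℕ+, ℂ) j with hcdef
  have hsum : Filter.Tendsto (fun G : Finset ℕ+ => vec G c) Filter.atTop (nhds u) :=
    lp.hasSum_single (by norm_num) u
  have hlim : Filter.Tendsto (fun G : Finset ℕ+ => Φ (vec G c)) Filter.atTop (nhds (Φ u)) :=
    (hcont.tendsto u).comp hsum
  have hbound : ∀ G : Finset ℕ+, ‖Φ (vec G c)‖ ≤
      2 * M * (Real.sqrt W' * Real.sqrt (∑ i ∈ F, ‖y i‖ ^ 2)) := by
    intro G
    set x : ℕ+ → ℂ := fun j => ((((j:ℕ):ℝ) ^ t : ℝ) : ℂ) * c j with hxdef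
    have hΦG : Φ (vec G c) = ∑ i ∈ F, ∑ j ∈ G,
        (i:ℂ) ^ (t:ℂ) * (j:ℂ) ^ (-(t:ℂ)) * entry A i j * x j * (starRingEnd ℂ) (y i) := by
      rw [hΦdef]
      refine Finset.sum_congr rfl fun i _ => ?_
      rw [apply_vec_coord, Finset.mul_sum, Finset.sum_mul]
      refine Finset.sum_congr rfl fun j _ => ?_
      rw [cpow_real_eq, cpow_real_neg_eq, hxdef]
      have hj : (0:ℝ) < ((j:ℕ):ℝ) := by exact_mod_cast j.pos
      have : (((j:ℕ):ℝ) ^ (-t) : ℝ) * (((j:ℕ):ℝ) ^ t : ℝ) = 1 := by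
        rw [← Real.rpow_add hj]
        simp
      have hone : ((((j:ℕ):ℝ) ^ (-t) : ℝ) : ℂ) * ((((j:ℕ):ℝ) ^ t : ℝ) : ℂ) = 1 := by
        rw [← Complex.ofReal_mul, this, Complex.ofReal_one]
      linear_combination (-(((((i:ℕ):ℝ) ^ t : ℝ) : ℂ) * entry A i j * c j *
        (starRingEnd ℂ) (y i))) * hone
    rw [hΦG]
    refine (interior_bound A B hAB M hA hB F G x y t ht).trans ?_
    have hx2 : ∑ j ∈ G, ‖x j‖ ^ 2 ≤ W' := by
      refine le_trans (le_of_eq ?_) (hW' G)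
      refine Finset.sum_congr rfl fun j _ => ?_
      have hx : ‖x j‖ = (((j:ℕ):ℝ) ^ t) * ‖(u : ∀ _ : ℕ+, ℂ) j‖ := by
        rw [hxdef]
        simp only [norm_mul, Complex.norm_real, Real.norm_eq_abs, hcdef]
        rw [_root_.abs_of_nonneg (Real.rpow_nonneg (by positivity : (0:ℝ) ≤ ((j:ℕ):ℝ)) t)]
      rw [hx]
      ring
    have := Real.sqrt_le_sqrt hx2
    gcongr
  refine le_of_tendsto hlim.norm (Filter.Eventually.of_forall hbound)


lemma sq_rpow {x : ℝ} (hx : 0 ≤ x) (t : ℝ) : (x ^ t) ^ 2 = x ^ (t * 2) := by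
  rw [← Real.rpow_natCast (x ^ t) 2, ← Real.rpow_mul hx]
  norm_num

lemma enn_term (i : ℕ+) (s : ℝ) (v : ℂ) :
    ((i:ℕ):ℝ≥0∞) ^ s * ((‖v‖₊ : ℝ≥0∞)) ^ 2 = ENNReal.ofReal (((i:ℕ):ℝ) ^ s * ‖v‖ ^ 2) := by
  have hipos : (0:ℝ) < ((i:ℕ):ℝ) := by exact_mod_cast i.pos
  rw [ENNReal.ofReal_mul (Real.rpow_nonneg (le_of_lt hipos) s)]
  congr 1
  · rw [← ENNReal.ofReal_rpow_of_pos hipos]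
    congr 1
    exact (ENNReal.ofReal_natCast _).symm
  · rw [ENNReal.ofReal_pow (norm_nonneg v)]
    congr 1
    exact (ofReal_norm v).symm

end Stmt4Aux

open Stmt4Aux

/-- If `A` is bounded on `ℓ²` together with the commutator `[N,A]` (the operator `NA`
with entries `(i-j)A_i^j`, `N = diag(1,2,3,…)`), then for every `s ∈ [-2,2]` the
operator `A` is bounded on the weighted space `ℓ²_s` (with weight `i^s`), with norm at
most `C·max{‖A‖,‖[N,A]‖}` for a constant `C` independent of `A` and `s`: for every
`u ∈ ℓ²`, `Σ_i i^s ‖(Au)_i‖² ≤ C²·max{‖A‖,‖[N,A]‖}²·Σ_i i^s ‖u_i‖²`. -/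
theorem stmt4 : ∃ C : ℝ, 0 < C ∧ ∀ s : ℝ, s ∈ Set.Icc (-2:ℝ) 2 →
    ∀ A NA : ell2 →L[ℂ] ell2,
      (∀ i j : ℕ+, entry NA i j = ((i:ℂ) - (j:ℂ)) * entry A i j) →
      ∀ u : ell2,
        (∑' i : ℕ+, ((i:ℕ) : ℝ≥0∞) ^ s * ((‖(A u : ∀ _ : ℕ+, ℂ) i‖₊ : ℝ≥0∞)) ^ 2)
          ≤ ENNReal.ofReal ((C * max ‖A‖ ‖NA‖) ^ 2) *
            ∑' i : ℕ+, ((i:ℕ) : ℝ≥0∞) ^ s * ((‖(u : ∀ _ : ℕ+, ℂ) i‖₊ : ℝ≥0∞)) ^ 2 := by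
  refine ⟨2, two_pos, ?_⟩
  intro s hs A NA hAB u
  obtain ⟨hs1, hs2⟩ := Set.mem_Icc.mp hs
  set M : ℝ := max ‖A‖ ‖NA‖ with hMdef
  have hA : ‖A‖ ≤ M := le_max_left _ _
  have hB : ‖NA‖ ≤ M := le_max_right _ _
  have hM : 0 ≤ M := le_trans (norm_nonneg A) hA
  set t : ℝ := s / 2 with htdef
  have hts : t * 2 = s := by rw [htdef]; ring
  have ht : t ∈ Set.Icc (-1:ℝ) 1 := by
    constructor <;> [skip; skip] <;> rw [htdef] <;> linarith
  by_cases hW : (∑' j : ℕ+, ((j:ℕ) : ℝ≥0∞) ^ s * ((‖(u : ∀ _ : ℕ+, ℂ) j‖₊ : ℝ≥0∞)) ^ 2) = ⊤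
  · rcases eq_or_lt_of_le hM with hM0 | hM0
    · have hA0 : A = 0 := by
        have h0 : ‖A‖ = 0 := le_antisymm (hM0 ▸ hA) (norm_nonneg _)
        exact norm_eq_zero.mp h0
      have hz : ∀ i : ℕ+, (A u : ∀ _ : ℕ+, ℂ) i = 0 := by
        intro i
        rw [hA0]
        simp only [ContinuousLinearMap.zero_apply]
        rw [lp.coeFn_zero]
        rfl
      simp only [hz]
      simp
    · rw [hW, ENNReal.mul_top]
      · exact le_top
      · rw [ne_eq, ENNReal.ofReal_eq_zero, not_le]
        positivity
  · -- main case
    have hWne : (∑' j : ℕ+, ((j:ℕ) : ℝ≥0∞) ^ s * ((‖(u : ∀ _ : ℕ+, ℂ) j‖₊ : ℝ≥0∞)) ^ 2) ≠ ⊤ := hW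
    set W' : ℝ := (∑' j : ℕ+, ((j:ℕ) : ℝ≥0∞) ^ s * ((‖(u : ∀ _ : ℕ+, ℂ) j‖₊ : ℝ≥0∞)) ^ 2).toReal
      with hW'def
    have hW'0 : 0 ≤ W' := ENNReal.toReal_nonneg
    have hconvG : ∀ (G : Finset ℕ+) (w : ∀ _ : ℕ+, ℂ),
        (∑ j ∈ G, ((j:ℕ) : ℝ≥0∞) ^ s * ((‖w j‖₊ : ℝ≥0∞)) ^ 2)
          = ENNReal.ofReal (∑ j ∈ G, ((j:ℕ):ℝ) ^ s * ‖w j‖ ^ 2) := by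
      intro G w
      rw [ENNReal.ofReal_sum_of_nonneg (fun j _ => by positivity)]
      exact Finset.sum_congr rfl fun j _ => enn_term j s (w j)
    have hpart : ∀ G : Finset ℕ+,
        ∑ j ∈ G, (((j:ℕ):ℝ) ^ t) ^ 2 * ‖(u : ∀ _ : ℕ+, ℂ) j‖ ^ 2 ≤ W' := by
      intro G
      have h1 : (∑ j ∈ G, ((j:ℕ) : ℝ≥0∞) ^ s * ((‖(u : ∀ _ : ℕ+, ℂ) j‖₊ : ℝ≥0∞)) ^ 2)
          ≤ ∑' j : ℕ+, ((j:ℕ) : ℝ≥0∞) ^ s * ((‖(u : ∀ _ : ℕ+, ℂ) j‖₊ : ℝ≥0∞)) ^ 2 :=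
        ENNReal.sum_le_tsum G
      rw [hconvG G _] at h1
      have h2 := (ENNReal.ofReal_le_iff_le_toReal hWne).mp h1
      refine le_trans (le_of_eq ?_) h2
      refine Finset.sum_congr rfl fun j _ => ?_
      rw [sq_rpow (by positivity : (0:ℝ) ≤ ((j:ℕ):ℝ)) t, hts]
    rw [ENNReal.tsum_eq_iSup_sum]
    refine iSup_le fun F => ?_
    rw [hconvG F _]
    set Q : ℝ := ∑ i ∈ F, ((i:ℕ):ℝ) ^ s * ‖(A u : ∀ _ : ℕ+, ℂ) i‖ ^ 2 with hQdef
    have hQ0 : 0 ≤ Q := Finset.sum_nonneg fun i _ => by positivity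
    set y : ℕ+ → ℂ := fun i => ((((i:ℕ):ℝ) ^ t : ℝ) : ℂ) * (A u : ∀ _ : ℕ+, ℂ) i with hydef
    have hy2 : ∑ i ∈ F, ‖y i‖ ^ 2 = Q := by
      refine Finset.sum_congr rfl fun i _ => ?_
      rw [hydef]
      simp only [norm_mul, Complex.norm_real, Real.norm_eq_abs]
      rw [_root_.abs_of_nonneg (Real.rpow_nonneg (by positivity : (0:ℝ) ≤ ((i:ℕ):ℝ)) t)]
      rw [mul_pow, sq_rpow (by positivity : (0:ℝ) ≤ ((i:ℕ):ℝ)) t, hts]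
    have hQsum : (∑ i ∈ F, ((((i:ℕ):ℝ) ^ t : ℝ) : ℂ) * (A u : ∀ _ : ℕ+, ℂ) i
        * (starRingEnd ℂ) (y i)) = ((Q : ℝ) : ℂ) := by
      rw [hQdef]
      rw [Complex.ofReal_sum]
      refine Finset.sum_congr rfl fun i _ => ?_
      rw [hydef]
      simp only [map_mul, Complex.conj_ofReal]
      set v : ℂ := (A u : ∀ _ : ℕ+, ℂ) i
      rw [show ((((i:ℕ):ℝ) ^ t : ℝ) : ℂ) * v * (((((i:ℕ):ℝ) ^ t : ℝ) : ℂ) * (starRingEnd ℂ) v)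
          = ((((i:ℕ):ℝ) ^ t : ℝ) : ℂ) ^ 2 * (v * (starRingEnd ℂ) v) from by ring]
      rw [Complex.mul_conj]
      rw [Complex.normSq_eq_norm_sq]
      rw [← Complex.ofReal_pow, ← Complex.ofReal_mul,
        sq_rpow (by positivity : (0:ℝ) ≤ ((i:ℕ):ℝ)) t, hts]
    have hkey := partial_bound A NA hAB M hA hB t ht u W' hpart F y
    rw [hQsum] at hkey
    rw [Complex.norm_real, Real.norm_eq_abs, _root_.abs_of_nonneg hQ0, hy2] at hkey
    have hfinal : Q ≤ (2 * M) ^ 2 * W' := by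
      nlinarith [Real.sq_sqrt hQ0, Real.sq_sqrt hW'0, Real.sqrt_nonneg Q,
        Real.sqrt_nonneg W', sq_nonneg (2 * M * Real.sqrt W' - Real.sqrt Q), hM, hkey]
    calc ENNReal.ofReal Q ≤ ENNReal.ofReal ((2 * M) ^ 2 * W') :=
          ENNReal.ofReal_le_ofReal hfinal
      _ = ENNReal.ofReal ((2 * M) ^ 2) * ENNReal.ofReal W' :=
          ENNReal.ofReal_mul (by positivity)
      _ = ENNReal.ofReal ((2 * M) ^ 2) *
          ∑' j : ℕ+, ((j:ℕ) : ℝ≥0∞) ^ s * ((‖(u : ∀ _ : ℕ+, ℂ) j‖₊ : ℝ≥0∞)) ^ 2 := by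
          rw [hW'def, ENNReal.ofReal_toReal hWne]
      _ = _ := by rw [hMdef]
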